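/- Let X be a metric space, let {G_i}_{i ∈ I} be a locally finite collection of open subsets of X, and let Z ⊆ X be an open set such that G_i ∩ G_j ⊆ Z for all i ≠ j. Then there exist pairwise disjoint open sets {E_i}_{i ∈ I} such that G_i \ Z ⊆ E_i ⊆ G_i for every i ∈ I. -/

import Mathlib

open EMetric Set

/-- Let `X` be a metric space, `{G i}` a locally finite collection
of open subsets of `X`, and `Z` an open set such that `G i ∩ G j ⊆ Z` for all `i ≠ j`.
Then there are pairwise disjoint open sets `E i` with `G i \ Z ⊆ E i ⊆ G i`. -/
theorem separate_by_disjoint_opens {X : Type*} [MetricSpace X] {ι : Type*}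
    (G : ι → Set X) (Z : Set X)
    (hG : ∀ i, IsOpen (G i)) (hZ : IsOpen Z) (hlf : LocallyFinite G)
    (hij : ∀ i j, i ≠ j → G i ∩ G j ⊆ Z) :
    ∃ E : ι → Set X, (∀ i, IsOpen (E i)) ∧ Pairwise (Function.onFun Disjoint E) ∧
      ∀ i, G i \ Z ⊆ E i ∧ E i ⊆ G i := by
  set F : ι → Set X := fun i => G i \ Z with hF
  -- G i is disjoint from F j for j ≠ i
  have hdisj : ∀ i j, i ≠ j → Disjoint (G i) (F j) := by
    intro i j hne
    rw [Set.disjoint_left]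
    intro x hxG hxF
    exact hxF.2 (hij i j hne ⟨hxG, hxF.1⟩)
  set U : ι → Set X := fun i => ⋃ j : {j // j ≠ i}, F j with hU
  set E : ι → Set X := fun i => G i ∩ {x | infEdist x (F i) < infEdist x (U i)} with hE
  refine ⟨E, ?_, ?_, ?_⟩
  · intro i
    exact (hG i).inter (isOpen_lt continuous_infEdist continuous_infEdist)
  · intro i j hne
    rw [Function.onFun, Set.disjoint_left]
    intro x hxi hxj
    have h1 : infEdist x (F i) < infEdist x (U i) := hxi.2
    have h2 : infEdist x (F j) < infEdist x (U j) := hxj.2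
    have h3 : infEdist x (U i) ≤ infEdist x (F j) :=
      infEdist_anti (Set.subset_iUnion (fun k : {k // k ≠ i} => F k) ⟨j, hne.symm⟩)
    have h4 : infEdist x (U j) ≤ infEdist x (F i) :=
      infEdist_anti (Set.subset_iUnion (fun k : {k // k ≠ j} => F k) ⟨i, hne⟩)
    exact absurd ((h1.trans_le h3).trans (h2.trans_le h4)) (lt_irrefl _)
  · intro i
    constructor
    · intro x hx
      refine ⟨hx.1, ?_⟩
      have h0 : infEdist x (F i) = 0 := infEdist_zero_of_mem hx
      simp only [Set.mem_setOf_eq, h0]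
      rw [pos_iff_ne_zero]
      intro hzero
      have hxcl : x ∈ closure (U i) := EMetric.mem_closure_iff_infEdist_zero.2 hzero
      have hlfU : LocallyFinite fun j : {j // j ≠ i} => F j :=
        ((hlf.subset fun j => Set.diff_subset).comp_injective Subtype.val_injective)
      rw [hU] at hxcl
      rw [hlfU.closure_iUnion] at hxcl
      obtain ⟨j, hj⟩ := Set.mem_iUnion.1 hxcl
      have : Disjoint (G i) (closure (F j)) :=
        (hdisj i j j.2.symm).closure_right (hG i)
      exact this.le_bot ⟨hx.1, hj⟩
    · exact Set.inter_subset_left
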